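/- Let n ≥ 2, p ∈ {2,...,n}, and μ ∈ Γ_p with μ_1 ≤ μ_2 ≤ ... ≤ μ_n. Then there exists a positive constant C depending only on n and p such that μ_1 ≥ -C max{ σ_p(μ)^{1/p}, (max{-σ_{p+1}(μ), 0})^{1/(p+1)} }. -/

import Mathlib

open Polynomial Finset

namespace StmtSix

variable {n : ℕ}

noncomputable def es (μ : Fin n → ℝ) (s : Finset (Fin n)) (q : ℕ) : ℝ :=
  ∑ t ∈ s.powersetCard q, ∏ i ∈ t, μ i

lemma es_zero (μ : Fin n → ℝ) (s : Finset (Fin n)) : es μ s 0 = 1 := by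
  simp [es]

lemma es_of_card_lt {μ : Fin n → ℝ} {s : Finset (Fin n)} {q : ℕ} (h : s.card < q) :
    es μ s q = 0 := by
  rw [es, Finset.powersetCard_eq_empty.2 h, Finset.sum_empty]

lemma es_one (μ : Fin n → ℝ) (s : Finset (Fin n)) : es μ s 1 = ∑ i ∈ s, μ i := by
  rw [es, Finset.powersetCard_one, Finset.sum_map]
  simp

lemma es_pos {μ : Fin n → ℝ} {s : Finset (Fin n)} {q : ℕ} (hq : q ≤ s.card)
    (hpos : ∀ i ∈ s, 0 < μ i) : 0 < es μ s q := by
  apply Finset.sum_pos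
  · intro t ht
    rw [Finset.mem_powersetCard] at ht
    exact Finset.prod_pos fun i hi => hpos i (ht.1 hi)
  · exact Finset.powersetCard_nonempty.2 hq

lemma es_erase {μ : Fin n → ℝ} {s : Finset (Fin n)} {k : Fin n} (hk : k ∈ s) (q : ℕ) :
    es μ s (q + 1) = es μ (s.erase k) (q + 1) + μ k * es μ (s.erase k) q := by
  have hins : s = insert k (s.erase k) := (Finset.insert_erase hk).symm
  rw [es]
  conv_lhs => rw [hins]
  rw [Finset.powersetCard_succ_insert (Finset.notMem_erase k s) q,
    Finset.sum_union]
  · congr 1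
    rw [Finset.sum_image (fun t ht u hu htu => ?inj)]
    case inj =>
      have ht' := (Finset.mem_powersetCard.1 ht).1
      have hu' := (Finset.mem_powersetCard.1 hu).1
      have hkt : k ∉ t := fun h => Finset.notMem_erase k s (ht' h)
      have hku : k ∉ u := fun h => Finset.notMem_erase k s (hu' h)
      rw [← Finset.erase_insert hkt, htu, Finset.erase_insert hku]
    rw [es, Finset.mul_sum]
    apply Finset.sum_congr rfl
    intro t ht
    have ht' := (Finset.mem_powersetCard.1 ht).1
    have hkt : k ∉ t := fun h => Finset.notMem_erase k s (ht' h)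
    rw [Finset.prod_insert hkt]
  · rw [Finset.disjoint_left]
    intro t ht ht2
    rcases Finset.mem_image.1 ht2 with ⟨u, hu, rfl⟩
    have := (Finset.mem_powersetCard.1 ht).1
    exact Finset.notMem_erase k s (this (Finset.mem_insert_self k u))

lemma es_weighted (μ : Fin n → ℝ) (s : Finset (Fin n)) (q : ℕ) :
    ∑ k ∈ s, μ k * es μ (s.erase k) q = (q + 1 : ℝ) * es μ s (q + 1) := by
  have lhs : ∑ k ∈ s, μ k * es μ (s.erase k) q
      = ∑ x ∈ s.sigma (fun k => (s.erase k).powersetCard q), μ x.1 * ∏ i ∈ x.2, μ i := by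
    rw [Finset.sum_sigma]
    exact Finset.sum_congr rfl fun k hk => by rw [es, Finset.mul_sum]
  have rhs : (q + 1 : ℝ) * es μ s (q + 1)
      = ∑ y ∈ (s.powersetCard (q + 1)).sigma (fun u => u), μ y.2 * ∏ i ∈ y.1.erase y.2, μ i := by
    rw [Finset.sum_sigma, es, Finset.mul_sum]
    apply Finset.sum_congr rfl
    intro u hu
    have hcard : u.card = q + 1 := (Finset.mem_powersetCard.1 hu).2
    calc (q + 1 : ℝ) * ∏ i ∈ u, μ i = ∑ _k ∈ u, ∏ i ∈ u, μ i := by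
          rw [Finset.sum_const, hcard]; push_cast; ring
      _ = ∑ k ∈ u, μ k * ∏ i ∈ u.erase k, μ i :=
          Finset.sum_congr rfl fun k hk => (Finset.mul_prod_erase u μ hk).symm
  rw [lhs, rhs]
  refine Finset.sum_nbij' (i := fun x => ⟨insert x.1 x.2, x.1⟩)
    (j := fun y => ⟨y.2, y.1.erase y.2⟩) ?_ ?_ ?_ ?_ ?_
  · rintro ⟨k, t⟩ hx
    rw [Finset.mem_sigma] at hx
    obtain ⟨hks, ht⟩ := hx
    rw [Finset.mem_powersetCard] at ht
    have hkt : k ∉ t := fun h => Finset.notMem_erase k s (ht.1 h)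
    rw [Finset.mem_sigma, Finset.mem_powersetCard]
    refine ⟨⟨?_, ?_⟩, Finset.mem_insert_self _ _⟩
    · intro i hi
      rcases Finset.mem_insert.1 hi with rfl | hi
      · exact hks
      · exact Finset.mem_of_mem_erase (ht.1 hi)
    · rw [Finset.card_insert_of_notMem hkt, ht.2]
  · rintro ⟨u, k⟩ hy
    rw [Finset.mem_sigma] at hy
    obtain ⟨hu, hk⟩ := hy
    rw [Finset.mem_powersetCard] at hu
    rw [Finset.mem_sigma, Finset.mem_powersetCard]
    refine ⟨hu.1 hk, fun i hi => ?_, ?_⟩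
    · rw [Finset.mem_erase]
      rw [Finset.mem_erase] at hi
      exact ⟨hi.1, hu.1 hi.2⟩
    · rw [Finset.card_erase_of_mem hk, hu.2]; omega
  · rintro ⟨k, t⟩ hx
    rw [Finset.mem_sigma] at hx
    have hkt : k ∉ t := fun h => Finset.notMem_erase k s ((Finset.mem_powersetCard.1 hx.2).1 h)
    simp only [Finset.erase_insert hkt]
  · rintro ⟨u, k⟩ hy
    rw [Finset.mem_sigma] at hy
    simp only [Finset.insert_erase hy.2]
  · rintro ⟨k, t⟩ hx
    rw [Finset.mem_sigma] at hx
    have hkt : k ∉ t := fun h => Finset.notMem_erase k s ((Finset.mem_powersetCard.1 hx.2).1 h)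
    simp only []
    rw [Finset.erase_insert hkt]

noncomputable def pol (μ : Fin n → ℝ) (s : Finset (Fin n)) : ℝ[X] :=
  ∏ i ∈ s, (X + C (μ i))

lemma pol_coeff (μ : Fin n → ℝ) (s : Finset (Fin n)) {j : ℕ} (hj : j ≤ s.card) :
    (pol μ s).coeff j = es μ s (s.card - j) := by
  rw [pol, Finset.prod_X_add_C_coeff _ _ hj]; rfl

lemma pol_natDegree_le (μ : Fin n → ℝ) (s : Finset (Fin n)) :
    (pol μ s).natDegree ≤ s.card := by
  refine le_trans (Polynomial.natDegree_prod_le _ _) ?_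
  refine le_of_eq ?_
  have h1 : (∑ i ∈ s, (X + C (μ i)).natDegree) = ∑ _i ∈ s, 1 :=
    Finset.sum_congr rfl fun i _ => Polynomial.natDegree_X_add_C _
  rw [h1, Finset.sum_const, smul_eq_mul, mul_one]

lemma pol_splits (μ : Fin n → ℝ) (s : Finset (Fin n)) :
    (pol μ s).Splits :=
  Polynomial.Splits.prod fun i _ =>
    Polynomial.Splits.of_natDegree_le_one (le_of_eq (Polynomial.natDegree_X_add_C _))

lemma splits_derivative {f : ℝ[X]} (hf : f.Splits) :
    (Polynomial.derivative f).Splits := by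
  by_cases h0 : Polynomial.derivative f = 0
  · rw [h0]; exact Polynomial.Splits.zero
  · have h1 : 1 ≤ f.natDegree := by
      by_contra h
      push_neg at h
      have h2 : f.natDegree = 0 := by omega
      obtain ⟨a, rfl⟩ := Polynomial.natDegree_eq_zero.1 h2
      simp at h0
    have hcard : Multiset.card f.roots = f.natDegree :=
      (Polynomial.splits_iff_card_roots).1 hf
    have hle := Polynomial.card_roots_le_derivative f
    have hle2 : Multiset.card (Polynomial.derivative f).roots
        ≤ (Polynomial.derivative f).natDegree := Polynomial.card_roots' _
    have hle3 := Polynomial.natDegree_derivative_le f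
    apply Polynomial.splits_iff_card_roots.2
    omega

lemma splits_iterate_derivative (k : ℕ) {f : ℝ[X]} (hf : f.Splits) :
    (Polynomial.derivative^[k] f).Splits := by
  induction k with
  | zero => exact hf
  | succ k ih => rw [Function.iterate_succ_apply']; exact splits_derivative ih

lemma step_ineq (a : ℝ) (g : ℝ[X]) (x : ℝ)
    (ih : g.eval x * ((Polynomial.derivative (Polynomial.derivative g)).eval x)
      ≤ ((Polynomial.derivative g).eval x) ^ 2) :
    ((X - C a) * g).eval x *
      ((Polynomial.derivative (Polynomial.derivative ((X - C a) * g))).eval x)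
    ≤ ((Polynomial.derivative ((X - C a) * g)).eval x) ^ 2 := by
  have h1 : Polynomial.derivative ((X - C a) * g)
      = g + (X - C a) * Polynomial.derivative g := by
    rw [Polynomial.derivative_mul, Polynomial.derivative_X_sub_C, one_mul]
  have h2 : Polynomial.derivative (Polynomial.derivative ((X - C a) * g))
      = Polynomial.derivative g + (Polynomial.derivative g
        + (X - C a) * Polynomial.derivative (Polynomial.derivative g)) := by
    rw [h1, Polynomial.derivative_add, Polynomial.derivative_mul,
      Polynomial.derivative_X_sub_C, one_mul]
  rw [h2, h1]
  simp only [Polynomial.eval_add, Polynomial.eval_mul, Polynomial.eval_sub,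
    Polynomial.eval_X, Polynomial.eval_C]
  nlinarith [mul_nonneg (sq_nonneg (x - a)) (sub_nonneg.2 ih), sq_nonneg (g.eval x)]

lemma key_ineq {f : ℝ[X]} (hf : f.Splits) (x : ℝ) :
    f.eval x * ((Polynomial.derivative (Polynomial.derivative f)).eval x)
      ≤ ((Polynomial.derivative f).eval x) ^ 2 := by
  by_cases h0 : f = 0
  · simp [h0]
  rw [hf.eq_prod_roots]
  generalize f.roots = t
  generalize f.leadingCoeff = c
  induction t using Multiset.induction_on with
  | empty => simp
  | cons a t ih =>
    rw [Multiset.map_cons, Multiset.prod_cons, mul_left_comm]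
    exact step_ineq a _ x ih

lemma iter_coeff_zero (f : ℝ[X]) (k : ℕ) :
    (Polynomial.derivative^[k] f).eval 0 = (k.factorial : ℝ) * f.coeff k := by
  rw [← Polynomial.coeff_zero_eq_eval_zero, Polynomial.coeff_iterate_derivative,
    zero_add, Nat.descFactorial_self, nsmul_eq_mul]

lemma newton_point {μ : Fin n → ℝ} {s : Finset (Fin n)} {q : ℕ} (hq : 1 ≤ q)
    (h0 : es μ s q = 0) (h1 : 0 < es μ s (q - 1)) : es μ s (q + 1) ≤ 0 := by
  set m := s.card with hm
  by_cases hc : m < q + 1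
  · exact le_of_eq (es_of_card_lt hc)
  push_neg at hc
  set K := m - (q + 1) with hK
  have hK1 : K + 1 = m - q := by omega
  have hK2 : K + 2 = m - (q - 1) := by omega
  have e0 : (Polynomial.derivative^[K] (pol μ s)).eval 0
      = (K.factorial : ℝ) * es μ s (q + 1) := by
    rw [iter_coeff_zero, pol_coeff μ s (by omega : K ≤ s.card)]
    congr 2
    omega
  have e1 : (Polynomial.derivative^[K + 1] (pol μ s)).eval 0
      = ((K + 1).factorial : ℝ) * es μ s q := by
    rw [iter_coeff_zero, pol_coeff μ s (by omega : K + 1 ≤ s.card)]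
    congr 2
    omega
  have e2 : (Polynomial.derivative^[K + 2] (pol μ s)).eval 0
      = ((K + 2).factorial : ℝ) * es μ s (q - 1) := by
    rw [iter_coeff_zero, pol_coeff μ s (by omega : K + 2 ≤ s.card)]
    congr 2
    omega
  have hkey := key_ineq (splits_iterate_derivative K (pol_splits μ s)) 0
  rw [← Function.iterate_succ_apply' Polynomial.derivative K (pol μ s),
    ← Function.iterate_succ_apply' Polynomial.derivative (K + 1) (pol μ s)] at hkey
  rw [e0, e1, e2, h0, mul_zero] at hkey
  have hf0 : (0 : ℝ) < (K.factorial : ℝ) := by positivity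
  have hf2 : (0 : ℝ) < ((K + 2).factorial : ℝ) := by positivity
  by_contra hpos
  push_neg at hpos
  nlinarith [mul_pos (mul_pos hf0 hpos) (mul_pos hf2 h1)]

lemma es_shift_pos {μ : Fin n → ℝ} {s : Finset (Fin n)} {p : ℕ}
    (hμ : ∀ q, 1 ≤ q → q ≤ p → 0 < es μ s q) {t : ℝ} (ht : 0 ≤ t)
    {q : ℕ} (hq1 : 1 ≤ q) (hqp : q ≤ p) : 0 < es (fun i => μ i + t) s q := by
  classical
  set m := s.card with hm
  have hqm : q ≤ m := by
    by_contra h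
    push_neg at h
    have := hμ q hq1 hqp
    rw [es_of_card_lt h] at this
    exact lt_irrefl _ this
  -- polynomial identity
  have hcomp : pol (fun i => μ i + t) s = (pol μ s).comp (X + C t) := by
    rw [pol, pol, Polynomial.prod_comp]
    refine Finset.prod_congr rfl fun i _ => ?_
    rw [Polynomial.add_comp, Polynomial.X_comp, Polynomial.C_comp, map_add]
    ring
  have hcard : (fun i => μ i + t) = fun i => μ i + t := rfl
  have hes : es (fun i => μ i + t) s q = (pol (fun i => μ i + t) s).coeff (m - q) := by
    rw [pol_coeff _ s (by omega : m - q ≤ s.card)]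
    congr 1
    omega
  rw [hes, hcomp]
  have hdeg : (pol μ s).natDegree < m + 1 := Nat.lt_succ_of_le (pol_natDegree_le μ s)
  conv_rhs => rw [Polynomial.as_sum_range' (pol μ s) (m + 1) hdeg]
  have hsum : ((∑ i ∈ Finset.range (m + 1),
        Polynomial.monomial i ((pol μ s).coeff i)).comp (X + C t))
      = ∑ i ∈ Finset.range (m + 1), C ((pol μ s).coeff i) * (X + C t) ^ i := by
    rw [Polynomial.comp, Polynomial.eval₂_finset_sum]
    exact Finset.sum_congr rfl fun i _ => Polynomial.eval₂_monomial _ _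
  rw [hsum, Polynomial.finset_sum_coeff]
  have hterm : ∀ i ∈ Finset.range (m + 1),
      (C ((pol μ s).coeff i) * (X + C t) ^ i).coeff (m - q)
      = es μ s (m - i) * (t ^ (i - (m - q)) * (i.choose (m - q) : ℝ)) := by
    intro i hi
    rw [Polynomial.coeff_C_mul, Polynomial.coeff_X_add_C_pow,
      pol_coeff μ s (by simpa using Nat.lt_succ_iff.1 (Finset.mem_range.1 hi))]
  rw [Finset.sum_congr rfl hterm]
  apply Finset.sum_pos'
  · intro i hi
    rcases lt_or_ge i (m - q) with h | h
    · rw [Nat.choose_eq_zero_of_lt h]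
      simp
    · have hmi : m - i ≤ q := by omega
      have hnn : 0 ≤ es μ s (m - i) := by
        rcases Nat.eq_zero_or_pos (m - i) with h0 | h0
        · rw [h0, es_zero]; norm_num
        · exact le_of_lt (hμ _ h0 (le_trans hmi hqp))
      have : (0:ℝ) ≤ t ^ (i - (m - q)) * (i.choose (m - q) : ℝ) :=
        mul_nonneg (pow_nonneg ht _) (by positivity)
      exact mul_nonneg hnn this
  · refine ⟨m - q, Finset.mem_range.2 (by omega), ?_⟩
    have h1 : m - (m - q) = q := by omega
    have h2 : m - q - (m - q) = 0 := by omega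
    rw [h1, h2, Nat.choose_self, pow_zero]
    simpa using hμ q hq1 hqp

lemma gamma_erase (P : ℕ) : ∀ (μ : Fin n → ℝ) (s : Finset (Fin n)),
    (∀ q, 1 ≤ q → q ≤ P → 0 < es μ s q) →
    ∀ k ∈ s, ∀ q, 1 ≤ q → q ≤ P - 1 → 0 < es μ (s.erase k) q := by
  induction P with
  | zero => intro μ s h k hk q hq1 hq2; omega
  | succ P ih =>
    intro μ s hμ k hk q hq1 hq2
    have hq2' : q ≤ P := by omega
    rcases lt_or_eq_of_le hq2' with hlt | heq
    · exact ih μ s (fun r hr1 hr2 => hμ r hr1 (by omega)) k hk q hq1 (by omega)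
    subst heq
    -- now 1 ≤ q and we must show 0 < es μ (s.erase k) q, knowing Γ_{q+1}(s)
    have hPs : q + 1 ≤ s.card := by
      by_contra h
      push_neg at h
      have := hμ (q + 1) (by omega) le_rfl
      rw [es_of_card_lt h] at this
      exact lt_irrefl _ this
    have hke : (s.erase k).card = s.card - 1 := Finset.card_erase_of_mem hk
    have hPe : q ≤ (s.erase k).card := by omega
    set g : ℝ → ℝ := fun t => es (fun i => μ i + t) (s.erase k) q with hg
    have hnoroot : ∀ t, 0 ≤ t → g t ≠ 0 := by
      intro t ht hg0
      set ν := fun i => μ i + t with hν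
      have hshift : ∀ r, 1 ≤ r → r ≤ q + 1 → 0 < es ν s r :=
        fun r h1 h2 => es_shift_pos hμ ht h1 h2
      have hprev : 0 < es ν (s.erase k) (q - 1) := by
        rcases Nat.lt_or_ge 1 q with h1q | h1q
        · exact ih ν s (fun r hr1 hr2 => hshift r hr1 (by omega)) k hk (q - 1)
            (by omega) (by omega)
        · have : q = 1 := by omega
          rw [this]
          rw [show (1 : ℕ) - 1 = 0 from rfl, es_zero]
          norm_num
      have hnext : es ν (s.erase k) (q + 1) ≤ 0 := newton_point hq1 hg0 hprev
      have hsplit : es ν s (q + 1)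
          = es ν (s.erase k) (q + 1) + ν k * es ν (s.erase k) q := es_erase hk q
      have hg0' : es ν (s.erase k) q = 0 := hg0
      rw [hg0', mul_zero, add_zero] at hsplit
      have := hshift (q + 1) (by omega) le_rfl
      rw [hsplit] at this
      exact absurd this (not_lt.2 hnext)
    set T : ℝ := 1 + ∑ i, |μ i| with hT
    have habs : ∀ i : Fin n, |μ i| ≤ ∑ j, |μ j| := fun i =>
      Finset.single_le_sum (fun j _ => abs_nonneg (μ j)) (Finset.mem_univ i)
    have hT0 : (0 : ℝ) ≤ T := by
      have : (0:ℝ) ≤ ∑ j, |μ j| := Finset.sum_nonneg fun j _ => abs_nonneg _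
      linarith
    have hgT : 0 < g T := by
      apply es_pos hPe
      intro i hi
      have h1 : -μ i ≤ |μ i| := neg_le_abs _
      have h2 := habs i
      simp only [hT]
      linarith
    have hcont : Continuous g := by
      apply continuous_finset_sum
      intro t ht
      apply continuous_finset_prod
      intro i hi
      exact continuous_const.add continuous_id
    have hg0pos : 0 < g 0 := by
      rcases lt_trichotomy (g 0) 0 with hneg | hzero | hpos
      · exfalso
        have hIcc : (0:ℝ) ∈ Set.Icc (g 0) (g T) := ⟨le_of_lt hneg, le_of_lt hgT⟩
        obtain ⟨x, hx, hgx⟩ := intermediate_value_Icc hT0 hcont.continuousOn hIcc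
        exact hnoroot x hx.1 hgx
      · exact absurd hzero (hnoroot 0 le_rfl)
      · exact hpos
    have heq0 : (fun i => μ i + (0:ℝ)) = μ := funext fun i => add_zero _
    have hg0' : 0 < es (fun i => μ i + (0:ℝ)) (s.erase k) q := hg0pos
    rw [heq0] at hg0'
    exact hg0' 

lemma es_erase_nonneg {μ : Fin n → ℝ} {s : Finset (Fin n)} {P : ℕ}
    (hμ : ∀ q, 1 ≤ q → q ≤ P → 0 < es μ s q) {k : Fin n} (hk : k ∈ s)
    {r : ℕ} (hr : r ≤ P - 1) : 0 ≤ es μ (s.erase k) r := by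
  rcases Nat.eq_zero_or_pos r with rfl | hr0
  · rw [es_zero]; norm_num
  · exact le_of_lt (gamma_erase P μ s hμ k hk r hr0 hr)

lemma rpow_trick {x c a : ℝ} (hx : 0 < x) (hc : 0 < c) (ha : 0 ≤ a)
    {q : ℕ} (hq : 1 ≤ q) (h : x ^ q ≤ c * a) :
    x ≤ c ^ ((1:ℝ)/q) * a ^ ((1:ℝ)/q) := by
  have hq0 : (q : ℝ) ≠ 0 := by positivity
  have h1 : x = (x ^ q) ^ ((1:ℝ)/q) := by
    rw [← Real.rpow_natCast x q, ← Real.rpow_mul hx.le, mul_one_div_cancel hq0,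
      Real.rpow_one]
  calc x = (x ^ q) ^ ((1:ℝ)/q) := h1
    _ ≤ (c * a) ^ ((1:ℝ)/q) := by
        apply Real.rpow_le_rpow (by positivity) h (by positivity)
    _ = c ^ ((1:ℝ)/q) * a ^ ((1:ℝ)/q) := Real.mul_rpow hc.le ha

set_option maxHeartbeats 2000000 in
theorem stmt_6_main (p : ℕ) (hn : 2 ≤ n) (hp : 2 ≤ p) (hpn : p ≤ n) :
    ∃ C : ℝ, 0 < C ∧ ∀ μ : Fin n → ℝ,
      (∀ q, 1 ≤ q → q ≤ p → 0 < es μ Finset.univ q) → Monotone μ →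
      -C * max ((es μ Finset.univ p) ^ ((1 : ℝ) / p))
          ((max (-(es μ Finset.univ (p + 1))) 0) ^ ((1 : ℝ) / (p + 1)))
        ≤ μ ⟨0, lt_of_lt_of_le two_pos hn⟩ := by
  have hn0 : (0:ℝ) < n := by positivity
  set Dp : ℝ := max 1 ((n : ℝ) - (p : ℝ)) with hDp
  have hDp0 : (0:ℝ) < Dp := lt_of_lt_of_le one_pos (le_max_left _ _)
  set A : ℝ := 2 * n * Dp ^ (p - 2) with hA
  set B : ℝ := 2 * ((p:ℝ) + 1) * Dp ^ (p - 1) with hB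
  have hA0 : 0 < A := by positivity
  have hB0 : 0 < B := by positivity
  set C : ℝ := max (max (A ^ ((1:ℝ)/p)) (B ^ ((1:ℝ)/((p:ℝ)+1)))) 1 with hC
  have hC0 : (0:ℝ) < C := lt_of_lt_of_le one_pos (le_max_right _ _)
  have hCA : A ^ ((1:ℝ)/p) ≤ C := le_trans (le_max_left _ _) (le_max_left _ _)
  have hCB : B ^ ((1:ℝ)/((p:ℝ)+1)) ≤ C := le_trans (le_max_right _ _) (le_max_left _ _)
  refine ⟨C, hC0, ?_⟩
  intro μ hΓ hmono
  set ι0 : Fin n := ⟨0, by omega⟩ with hι0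
  set σp : ℝ := es μ Finset.univ p with hσp
  set sP : ℝ := max (-(es μ Finset.univ (p + 1))) 0 with hsP
  have hσppos : 0 < σp := hΓ p (by omega) le_rfl
  have hsPnn : 0 ≤ sP := le_max_right _ _
  set X : ℝ := σp ^ ((1:ℝ)/p) with hX
  set Y : ℝ := sP ^ ((1:ℝ)/(p+1)) with hY
  have hXnn : 0 ≤ X := Real.rpow_nonneg hσppos.le _
  have hYnn : 0 ≤ Y := Real.rpow_nonneg hsPnn _
  have hmaxnn : 0 ≤ max X Y := le_trans hXnn (le_max_left _ _)
  rcases le_or_gt 0 (μ ι0) with hnonneg | hneg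
  · have : -C * max X Y ≤ 0 := by
      rw [neg_mul]
      exact neg_nonpos.2 (mul_nonneg hC0.le hmaxnn)
    exact le_trans this hnonneg
  -- main case: μ ι0 < 0
  set m1 : ℝ := -μ ι0 with hm1
  have hm1pos : 0 < m1 := by simp only [hm1]; linarith only [hneg]
  -- the chain of sets
  set T : ℕ → Finset (Fin n) :=
    fun j => Finset.univ.filter (fun i : Fin n => (i : ℕ) < n - j) with hT
  have hT0univ : T 0 = Finset.univ := by
    ext i
    simp [hT, i.is_lt]
  have hTsucc : ∀ j, T (j + 1) = (T j).erase ⟨n - 1 - j, by omega⟩ := by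
    intro j
    ext i
    simp only [hT, Finset.mem_filter, Finset.mem_erase, Finset.mem_univ, true_and,
      Fin.ext_iff, ne_eq]
    have := i.is_lt
    omega
  have hmem : ∀ j, j ≤ n - 2 → (⟨n - 1 - j, by omega⟩ : Fin n) ∈ T j := by
    intro j hj
    simp only [hT, Finset.mem_filter, Finset.mem_univ, true_and]
    omega
  have chain : ∀ j, j ≤ p - 1 → (T j).card = n - j ∧
      (∀ q, 1 ≤ q → q ≤ p - j → 0 < es μ (T j) q) := by
    intro j
    induction j with
    | zero =>
      intro _
      constructor
      · rw [hT0univ, Finset.card_univ, Fintype.card_fin]; omega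
      · rw [hT0univ]; simpa using hΓ
    | succ j ih =>
      intro hj
      obtain ⟨hcard, hgam⟩ := ih (by omega)
      have hjn : j ≤ n - 2 := by omega
      have hm := hmem j hjn
      constructor
      · rw [hTsucc j, Finset.card_erase_of_mem hm, hcard]; omega
      · intro q hq1 hq2
        rw [hTsucc j]
        exact gamma_erase (p - j) μ (T j) hgam _ hm q hq1 (by omega)
  -- GAP inequality
  set κ : Fin n := ⟨n - p, by omega⟩ with hκdef
  have hGAP : 0 < μ ι0 + ((n : ℝ) - p) * μ κ := by
    obtain ⟨hcard, hgam⟩ := chain (p - 1) le_rfl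
    have hpos1 : 0 < es μ (T (p - 1)) 1 := hgam 1 le_rfl (by omega)
    rw [es_one] at hpos1
    have hι0T : ι0 ∈ T (p - 1) := by
      simp only [hT, Finset.mem_filter, Finset.mem_univ, true_and]
      show (0:ℕ) < n - (p - 1)
      omega
    rw [← Finset.add_sum_erase _ μ hι0T] at hpos1
    have hbound : ∑ i ∈ (T (p - 1)).erase ι0, μ i
        ≤ ((T (p - 1)).erase ι0).card • μ κ := by
      apply Finset.sum_le_card_nsmul
      intro i hi
      apply hmono
      have hi' : (i : ℕ) < n - (p - 1) :=
        (Finset.mem_filter.1 (Finset.mem_of_mem_erase hi)).2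
      rw [Fin.le_def]
      simp only [hκdef]
      omega
    rw [Finset.card_erase_of_mem hι0T, hcard] at hbound
    have hcast : ((n - (p - 1) - 1 : ℕ) : ℝ) = (n : ℝ) - p := by
      have : n - (p - 1) - 1 = n - p := by omega
      rw [this]
      push_cast [hpn]
      ring
    rw [nsmul_eq_mul, hcast] at hbound
    linarith only [hpos1, hbound]
  have hnp : (0:ℝ) < (n:ℝ) - p ∧ 0 < μ κ := by
    have h1 : 0 < ((n:ℝ) - p) * μ κ := by linarith only [hGAP, hneg]
    have hnn : (0:ℝ) ≤ (n:ℝ) - p := sub_nonneg.2 (Nat.cast_le.2 hpn)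
    constructor
    · rcases lt_or_eq_of_le hnn with h | h
      · exact h
      · exfalso; rw [← h, zero_mul] at h1; exact lt_irrefl _ h1
    · by_contra h
      push_neg at h
      have : ((n:ℝ) - p) * μ κ ≤ 0 := mul_nonpos_of_nonneg_of_nonpos hnn h
      linarith only [h1, this]
  obtain ⟨hnppos, hκpos⟩ := hnp
  have hpltn : p < n := by
    by_contra h
    push_neg at h
    have : (n:ℝ) ≤ (p:ℝ) := Nat.cast_le.2 h
    linarith only [hnppos, this]
  set Dr : ℝ := (n:ℝ) - p with hDr
  have hDr1 : (1:ℝ) ≤ Dr := by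
    have : ((p:ℕ):ℝ) + 1 ≤ ((n:ℕ):ℝ) := by exact_mod_cast hpltn
    simp only [hDr]
    linarith only [this]
  have hDr0 : (0:ℝ) < Dr := lt_of_lt_of_le one_pos hDr1
  have hDpeq : Dp = Dr := max_eq_right hDr1
  have hκtop : ∀ j, j ≤ p - 1 → μ κ ≤ μ (⟨n - 1 - j, by omega⟩ : Fin n) := by
    intro j hj
    apply hmono
    rw [Fin.le_def]
    show n - p ≤ n - 1 - j
    omega
  -- product lower bound along the chain
  have hS : ∀ d, d ≤ p - 2 → (μ κ) ^ d ≤ es μ (T (p - 1 - d)) d := by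
    intro d
    induction d with
    | zero => intro _; rw [pow_zero, es_zero]
    | succ d ih =>
      intro hd
      have ihd := ih (by omega)
      have hj1 : p - 1 - (d + 1) = p - 2 - d := by omega
      have hj2 : p - 1 - d = (p - 2 - d) + 1 := by omega
      rw [hj1]
      rw [hj2] at ihd
      set j := p - 2 - d with hj
      obtain ⟨hcardj1, hgamj1⟩ := chain (j + 1) (by omega)
      have hmj : (⟨n - 1 - j, by omega⟩ : Fin n) ∈ T j := hmem j (by omega)
      have herase := es_erase (μ := μ) hmj d
      rw [← hTsucc j] at herase
      have h1 : 0 ≤ es μ (T (j + 1)) (d + 1) :=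
        le_of_lt (hgamj1 (d + 1) (by omega) (by omega))
      have h2 : μ κ ≤ μ ⟨n - 1 - j, by omega⟩ := hκtop j (by omega)
      have h3 : (0:ℝ) ≤ (μ κ) ^ d := pow_nonneg hκpos.le d
      calc (μ κ) ^ (d + 1) = μ κ * (μ κ) ^ d := by ring
        _ ≤ μ (⟨n - 1 - j, by omega⟩ : Fin n) * es μ (T (j + 1)) d :=
            mul_le_mul h2 ihd h3 (le_trans hκpos.le h2)
        _ ≤ es μ (T j) (d + 1) := by rw [herase]; linarith only [h1]
  set top : ℝ := μ (⟨n - 1 - 0, by omega⟩ : Fin n) with htop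
  have htoppos : 0 < top := lt_of_lt_of_le hκpos (hκtop 0 (by omega))
  -- es μ univ (p-1) ≥ top * (μ κ)^(p-2)
  have hprod : top * (μ κ) ^ (p - 2) ≤ es μ Finset.univ (p - 1) := by
    have hm0 : (⟨n - 1 - 0, by omega⟩ : Fin n) ∈ T 0 := hmem 0 (by omega)
    have herase := es_erase (μ := μ) hm0 (p - 2)
    rw [← hTsucc 0, (by omega : p - 2 + 1 = p - 1)] at herase
    obtain ⟨_, hgam1⟩ := chain 1 (by omega)
    have h1 : 0 ≤ es μ (T 1) (p - 1) :=
      le_of_lt (hgam1 (p - 1) (by omega) (by omega))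
    have h2 := hS (p - 2) le_rfl
    rw [(by omega : p - 1 - (p - 2) = 1)] at h2
    have h3 : top * (μ κ) ^ (p - 2) ≤ top * es μ (T 1) (p - 2) :=
      mul_le_mul_of_nonneg_left h2 htoppos.le
    rw [← hT0univ, herase]
    linarith only [h1, h3]
  -- erase ι0 bound
  have hEB : es μ Finset.univ (p - 1) ≤ es μ (Finset.univ.erase ι0) (p - 1) := by
    have herase0 := es_erase (μ := μ) (Finset.mem_univ ι0) (p - 2)
    rw [(by omega : p - 2 + 1 = p - 1)] at herase0
    have hw : 0 ≤ es μ (Finset.univ.erase ι0) (p - 2) :=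
      es_erase_nonneg hΓ (Finset.mem_univ _) (by omega)
    have : μ ι0 * es μ (Finset.univ.erase ι0) (p - 2) ≤ 0 :=
      mul_nonpos_of_nonpos_of_nonneg hneg.le hw
    rw [herase0]
    linarith only [this]
  -- identity
  have hid : ∑ k, (μ k) ^ 2 * es μ (Finset.univ.erase k) (p - 1)
      = (es μ Finset.univ 1) * σp - ((p:ℝ) + 1) * es μ Finset.univ (p + 1) := by
    have hterm : ∀ k ∈ Finset.univ, (μ k) ^ 2 * es μ (Finset.univ.erase k) (p - 1)
        = μ k * es μ Finset.univ p - μ k * es μ (Finset.univ.erase k) p := by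
      intro k _
      have h := es_erase (μ := μ) (Finset.mem_univ k) (p - 1)
      rw [(by omega : p - 1 + 1 = p)] at h
      have h2 : μ k * es μ (Finset.univ.erase k) (p - 1)
          = es μ Finset.univ p - es μ (Finset.univ.erase k) p := by linarith only [h]
      calc (μ k) ^ 2 * es μ (Finset.univ.erase k) (p - 1)
          = μ k * (μ k * es μ (Finset.univ.erase k) (p - 1)) := by ring
        _ = μ k * (es μ Finset.univ p - es μ (Finset.univ.erase k) p) := by rw [h2]
        _ = μ k * es μ Finset.univ p - μ k * es μ (Finset.univ.erase k) p := by ring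
    rw [Finset.sum_congr rfl hterm, Finset.sum_sub_distrib, ← Finset.sum_mul, ← es_one]
    have hw := es_weighted μ Finset.univ p
    rw [hw]
  -- drop all terms but ι0
  have hdrop : (μ ι0) ^ 2 * es μ (Finset.univ.erase ι0) (p - 1)
      ≤ ∑ k, (μ k) ^ 2 * es μ (Finset.univ.erase k) (p - 1) :=
    Finset.single_le_sum (f := fun k => (μ k) ^ 2 * es μ (Finset.univ.erase k) (p - 1))
      (fun k _ => mul_nonneg (sq_nonneg _) (es_erase_nonneg hΓ (Finset.mem_univ k) (by omega)))
      (Finset.mem_univ ι0)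
  -- es1 bound
  have hes1 : es μ Finset.univ 1 ≤ (n:ℝ) * top := by
    rw [es_one]
    have hb : ∀ i ∈ Finset.univ, μ i ≤ top := by
      intro i _
      apply hmono
      rw [Fin.le_def]
      show (i:ℕ) ≤ n - 1 - 0
      have := i.is_lt
      omega
    have := Finset.sum_le_card_nsmul Finset.univ μ top hb
    rwa [Finset.card_univ, Fintype.card_fin, nsmul_eq_mul] at this
  -- sP bound
  have hsb : -(((p:ℝ) + 1) * es μ Finset.univ (p + 1)) ≤ ((p:ℝ) + 1) * sP := by
    have h1 : -(es μ Finset.univ (p + 1)) ≤ sP := le_max_left _ _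
    have hp1 : (0:ℝ) ≤ (p:ℝ) + 1 := by positivity
    have h2 : -(((p:ℝ) + 1) * es μ Finset.univ (p + 1))
        = ((p:ℝ) + 1) * (-(es μ Finset.univ (p + 1))) := by ring
    rw [h2]
    exact mul_le_mul_of_nonneg_left h1 hp1
  -- master inequality
  set E : ℝ := es μ (Finset.univ.erase ι0) (p - 1) with hE
  have hm1sq : m1 ^ 2 = (μ ι0) ^ 2 := by rw [hm1]; ring
  have master : m1 ^ 2 * E ≤ (n:ℝ) * top * σp + ((p:ℝ) + 1) * sP := by
    have h1 : (es μ Finset.univ 1) * σp ≤ (n:ℝ) * top * σp :=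
      mul_le_mul_of_nonneg_right hes1 hσppos.le
    rw [hm1sq]
    calc (μ ι0) ^ 2 * E ≤ ∑ k, (μ k) ^ 2 * es μ (Finset.univ.erase k) (p - 1) := hdrop
      _ = (es μ Finset.univ 1) * σp - ((p:ℝ) + 1) * es μ Finset.univ (p + 1) := hid
      _ ≤ (n:ℝ) * top * σp + ((p:ℝ) + 1) * sP := by linarith only [h1, hsb]
  have hElow : top * (μ κ) ^ (p - 2) ≤ E := le_trans hprod hEB
  have hκlow : m1 / Dr ≤ μ κ := by
    rw [div_le_iff₀ hDr0]
    linarith only [hGAP, hm1]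
  have hm1top : m1 / Dr ≤ top := le_trans hκlow (hκtop 0 (by omega))
  have hpow : (m1 / Dr) ^ (p - 2) ≤ (μ κ) ^ (p - 2) :=
    pow_le_pow_left₀ (by positivity) hκlow _
  have hDrp2 : (0:ℝ) < Dr ^ (p - 2) := by positivity
  have key : m1 ^ p * top / Dr ^ (p - 2) ≤ (n:ℝ) * top * σp + ((p:ℝ) + 1) * sP := by
    have hpp : m1 ^ 2 * m1 ^ (p - 2) = m1 ^ p := by
      rw [← pow_add, (by omega : 2 + (p - 2) = p)]
    have hLHS : m1 ^ p * top / Dr ^ (p - 2) = m1 ^ 2 * ((m1 / Dr) ^ (p - 2) * top) := by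
      rw [div_pow, ← hpp]
      ring
    rw [hLHS]
    calc m1 ^ 2 * ((m1 / Dr) ^ (p - 2) * top)
        ≤ m1 ^ 2 * ((μ κ) ^ (p - 2) * top) := by
          apply mul_le_mul_of_nonneg_left _ (sq_nonneg m1)
          exact mul_le_mul_of_nonneg_right hpow htoppos.le
      _ = m1 ^ 2 * (top * (μ κ) ^ (p - 2)) := by ring
      _ ≤ m1 ^ 2 * E := mul_le_mul_of_nonneg_left hElow (sq_nonneg m1)
      _ ≤ _ := master
  have hfinal : m1 ≤ C * max X Y := by
    rcases le_total (((p:ℝ) + 1) * sP) ((n:ℝ) * top * σp) with hcase | hcase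
    · -- σp dominates
      have h1 : m1 ^ p * top / Dr ^ (p - 2) ≤ 2 * ((n:ℝ) * top * σp) := by
        linarith only [key, hcase]
      rw [div_le_iff₀ hDrp2] at h1
      have h3 : m1 ^ p * top ≤ (A * σp) * top := by
        rw [hA, hDpeq]
        calc m1 ^ p * top ≤ 2 * ((n:ℝ) * top * σp) * Dr ^ (p - 2) := h1
          _ = 2 * (n:ℝ) * Dr ^ (p - 2) * σp * top := by ring
      have h4 : m1 ^ p ≤ A * σp := le_of_mul_le_mul_right h3 htoppos
      have h5 := rpow_trick hm1pos hA0 hσppos.le (by omega : 1 ≤ p) h4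
      have h6 : A ^ ((1:ℝ)/p) * X ≤ C * max X Y :=
        mul_le_mul hCA (le_max_left X Y) hXnn hC0.le
      calc m1 ≤ A ^ ((1:ℝ)/p) * σp ^ ((1:ℝ)/p) := h5
        _ = A ^ ((1:ℝ)/p) * X := rfl
        _ ≤ C * max X Y := h6
    · -- sP dominates
      have h1 : m1 ^ p * top / Dr ^ (p - 2) ≤ 2 * (((p:ℝ) + 1) * sP) := by
        linarith only [key, hcase]
      rw [div_le_iff₀ hDrp2] at h1
      have h2 : m1 ^ (p + 1) / Dr ≤ m1 ^ p * top := by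
        calc m1 ^ (p + 1) / Dr = m1 ^ p * (m1 / Dr) := by rw [pow_succ]; ring
          _ ≤ m1 ^ p * top := mul_le_mul_of_nonneg_left hm1top (by positivity)
      have h2' : m1 ^ (p + 1) ≤ m1 ^ p * top * Dr := by
        rw [← div_le_iff₀ hDr0]
        exact h2
      have h3 : m1 ^ (p + 1) ≤ 2 * (((p:ℝ) + 1) * sP) * (Dr ^ (p - 2) * Dr) := by
        calc m1 ^ (p + 1) ≤ m1 ^ p * top * Dr := h2'
          _ ≤ 2 * (((p:ℝ) + 1) * sP) * Dr ^ (p - 2) * Dr :=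
              mul_le_mul_of_nonneg_right h1 hDr0.le
          _ = 2 * (((p:ℝ) + 1) * sP) * (Dr ^ (p - 2) * Dr) := by ring
      have hDrpow : Dr ^ (p - 2) * Dr = Dr ^ (p - 1) := by
        rw [← pow_succ, (by omega : p - 2 + 1 = p - 1)]
      rw [hDrpow] at h3
      have h4 : m1 ^ (p + 1) ≤ B * sP := by
        rw [hB, hDpeq]
        calc m1 ^ (p + 1) ≤ 2 * (((p:ℝ) + 1) * sP) * Dr ^ (p - 1) := h3
          _ = 2 * ((p:ℝ) + 1) * Dr ^ (p - 1) * sP := by ring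
      have h5 := rpow_trick hm1pos hB0 hsPnn (by omega : 1 ≤ p + 1) h4
      have hcast : ((p + 1 : ℕ) : ℝ) = (p:ℝ) + 1 := by push_cast; ring
      rw [hcast] at h5
      have h6 : B ^ ((1:ℝ)/((p:ℝ)+1)) * Y ≤ C * max X Y :=
        mul_le_mul hCB (le_max_right X Y) hYnn hC0.le
      calc m1 ≤ B ^ ((1:ℝ)/((p:ℝ)+1)) * sP ^ ((1:ℝ)/((p:ℝ)+1)) := h5
        _ = B ^ ((1:ℝ)/((p:ℝ)+1)) * Y := rfl
        _ ≤ C * max X Y := h6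
  linarith only [hfinal, hm1]

end StmtSix


/-- The `p`-th elementary symmetric polynomial of `μ : Fin n → ℝ`. -/
noncomputable def esymm (n p : ℕ) (μ : Fin n → ℝ) : ℝ :=
  ∑ t ∈ Finset.powersetCard p Finset.univ, ∏ i ∈ t, μ i

/-- The `p`-th Gårding cone in `ℝⁿ`. -/
def gardingCone (n p : ℕ) : Set (Fin n → ℝ) :=
  {μ | ∀ q, 1 ≤ q → q ≤ p → 0 < esymm n q μ}

theorem stmt_6 (n p : ℕ) (hn : 2 ≤ n) (hp : 2 ≤ p) (hpn : p ≤ n) :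
    ∃ C : ℝ, 0 < C ∧ ∀ μ : Fin n → ℝ, μ ∈ gardingCone n p → Monotone μ →
      -C * max ((esymm n p μ) ^ ((1 : ℝ) / p))
          ((max (-(esymm n (p + 1) μ)) 0) ^ ((1 : ℝ) / (p + 1)))
        ≤ μ ⟨0, by omega⟩ := by
  obtain ⟨C, hC, h⟩ := StmtSix.stmt_6_main p hn hp hpn
  exact ⟨C, hC, fun μ hμ hmono => h μ (fun q h1 h2 => hμ q h1 h2) hmono⟩
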